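/- If G is a finite simple graph on n vertices, then FCC(G) = n − FCP(G), i.e., the optimal value of the minimum fractional clique cover LP equals n minus the optimal value of the maximum fractional clique packing LP. -/

import Mathlib

open Finset

variable {V : Type} [Fintype V] [DecidableEq V]

/-- Fractional vertex cover LP value. -/
noncomputable def FVC (G : SimpleGraph V) : ℝ :=
  sInf {s : ℝ | ∃ x : V → ℝ, (∀ v, 0 ≤ x v ∧ x v ≤ 1) ∧
    (∀ u v, G.Adj u v → 1 ≤ x u + x v) ∧ s = ∑ v, x v}

/-- Fractional matching LP value. -/
noncomputable def FMM (G : SimpleGraph V) [DecidableRel G.Adj] : ℝ :=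
  sSup {s : ℝ | ∃ y : Sym2 V → ℝ, (∀ e, 0 ≤ y e ∧ y e ≤ 1) ∧
    (∀ v : V, ∑ e ∈ G.edgeFinset, (if v ∈ e then y e else 0) ≤ 1) ∧
    s = ∑ e ∈ G.edgeFinset, y e}

/-- Fractional clique packing LP value. -/
noncomputable def FCP (G : SimpleGraph V) : ℝ :=
  sSup {s : ℝ | ∃ x : Finset V → ℝ, (∀ C, 0 ≤ x C ∧ x C ≤ 1) ∧
    (∀ C : Finset V, ¬ G.IsClique (C : Set V) → x C = 0) ∧
    (∀ v : V, ∑ C : Finset V, (if v ∈ C then x C else 0) ≤ 1) ∧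
    s = ∑ C : Finset V, x C * ((C.card : ℝ) - 1)}

/-- Fractional clique cover LP value. -/
noncomputable def FCC (G : SimpleGraph V) : ℝ :=
  sInf {s : ℝ | ∃ y : Finset V → ℝ, (∀ C, 0 ≤ y C ∧ y C ≤ 1) ∧
    (∀ C : Finset V, ¬ G.IsClique (C : Set V) → y C = 0) ∧
    (∀ v : V, 1 ≤ ∑ C : Finset V, (if v ∈ C then y C else 0)) ∧
    s = ∑ C : Finset V, y C}

/-- Maximum independent set size. -/
noncomputable def alphaNum (G : SimpleGraph V) : ℕ :=
  sSup {k : ℕ | ∃ S : Finset V,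
    ((S : Set V).Pairwise fun u v => ¬ G.Adj u v) ∧ S.card = k}

/-- Clique number. -/
noncomputable def cliqueNum (G : SimpleGraph V) : ℕ :=
  sSup {k : ℕ | ∃ C : Finset V, G.IsNClique k C}

/-- Edge-and-small-clique constrained fractional independent set LP value `α_{Fk}`. -/
noncomputable def alphaF (G : SimpleGraph V) (k : ℕ) : ℝ :=
  sSup {s : ℝ | ∃ x : V → ℝ, (∀ v, 0 ≤ x v ∧ x v ≤ 1) ∧
    (∀ C : Finset V, G.IsClique (C : Set V) → C.card ≤ k → ∑ v ∈ C, x v ≤ 1) ∧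
    s = ∑ v, x v}

/-- Minimum vertex cover size. -/
noncomputable def VC (G : SimpleGraph V) : ℕ :=
  sInf {k : ℕ | ∃ S : Finset V,
    (∀ u v, G.Adj u v → u ∈ S ∨ v ∈ S) ∧ S.card = k}

/-- Storage capacity. -/
noncomputable def Cap (G : SimpleGraph V) : ℝ :=
  sSup {x : ℝ | ∃ q : ℕ, 2 ≤ q ∧ ∃ C : Finset (V → Fin q),
    (∀ v : V, ∃ f : ({u : V // G.Adj v u} → Fin q) → Fin q,
      ∀ c ∈ C, f (fun u => c u.1) = c v) ∧
    x = Real.logb q C.card}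

/-- Index coding broadcast rate over alphabet of size `q`. -/
noncomputable def IndQ (G : SimpleGraph V) (q : ℕ) : ℕ :=
  sInf {l : ℕ | ∃ f : (V → Fin q) → (Fin l → Fin q), ∀ v : V,
    ∃ g : (Fin l → Fin q) → ({u : V // G.Adj v u} → Fin q) → Fin q,
      ∀ p : V → Fin q, g (f p) (fun u => p u.1) = p v}

/-- Index coding broadcast rate. -/
noncomputable def Ind (G : SimpleGraph V) : ℝ :=
  sInf {x : ℝ | ∃ q : ℕ, 2 ≤ q ∧ x = IndQ G q}

set_option linter.unusedSectionVars false


/-- Total weight at a vertex. -/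
noncomputable def Tf (y : Finset V → ℝ) (v : V) : ℝ :=
  ∑ C : Finset V, if v ∈ C then y C else 0

lemma Tf_nonneg (y : Finset V → ℝ) (h0 : ∀ C, 0 ≤ y C) (v : V) : 0 ≤ Tf y v := by
  apply Finset.sum_nonneg; intro C _; split_ifs; exacts [h0 C, le_refl 0]

lemma le_Tf (y : Finset V → ℝ) (h0 : ∀ C, 0 ≤ y C) {v : V} {C : Finset V} (hv : v ∈ C) :
    y C ≤ Tf y v := by
  have := Finset.single_le_sum (f := fun D => if v ∈ D then y D else 0)
    (fun D _ => by split_ifs; exacts [h0 D, le_refl 0]) (Finset.mem_univ C)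
  simpa [hv, Tf] using this

lemma sum_mul_card (y : Finset V → ℝ) :
    ∑ C : Finset V, y C * (C.card : ℝ) = ∑ v, Tf y v := by
  unfold Tf
  rw [Finset.sum_comm]
  apply Finset.sum_congr rfl
  intro C _
  simp [Finset.sum_ite_mem, mul_comm]

lemma sum_ite_singleton (a : V → ℝ) (v : V) :
    ∑ C : Finset V, (if v ∈ C then (∑ u, if C = {u} then a u else 0) else 0) = a v := by
  have h : ∀ C : Finset V, (if v ∈ C then (∑ u, if C = {u} then a u else 0) else 0)
      = ∑ u, if C = {u} then (if v ∈ ({u} : Finset V) then a u else 0) else 0 := by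
    intro C
    split_ifs with h
    · apply Finset.sum_congr rfl; intro u _
      split_ifs with h2 h3 <;> simp_all
    · symm; apply Finset.sum_eq_zero; intro u _
      split_ifs with h2 h3 <;> simp_all
  rw [Finset.sum_congr rfl fun C _ => h C, Finset.sum_comm]
  simp [Finset.sum_ite_eq, eq_comm]

lemma keyBase (G : SimpleGraph V) (y : Finset V → ℝ) (h0 : ∀ C, 0 ≤ y C)
    (hcl : ∀ C : Finset V, ¬ G.IsClique (C : Set V) → y C = 0)
    (hcov : ∀ v, 1 ≤ Tf y v) (h1 : ∀ v, Tf y v ≤ 1) :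
    ∃ x : Finset V → ℝ, (∀ C, 0 ≤ x C ∧ x C ≤ 1) ∧
      (∀ C : Finset V, ¬ G.IsClique (C : Set V) → x C = 0) ∧
      (∀ v : V, ∑ C : Finset V, (if v ∈ C then x C else 0) ≤ 1) ∧
      (Fintype.card V : ℝ) - ∑ C : Finset V, y C ≤ ∑ C : Finset V, x C * ((C.card : ℝ) - 1) := by
  refine ⟨fun C => if C = ∅ then 0 else y C, ?_, ?_, ?_, ?_⟩
  · intro C
    dsimp only
    constructor
    · split_ifs; exacts [le_refl 0, h0 C]
    · split_ifs with h
      · exact zero_le_one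
      · obtain ⟨v, hv⟩ := Finset.nonempty_iff_ne_empty.2 h
        exact (le_Tf y h0 hv).trans (h1 v)
  · intro C hC
    dsimp only
    split_ifs with h
    · rfl
    · exact hcl C hC
  · intro v
    have he : ∀ C : Finset V, (if v ∈ C then (if C = ∅ then 0 else y C) else 0)
        = (if v ∈ C then y C else 0) := by
      intro C; split_ifs with h1 h2 <;> simp_all
    rw [Finset.sum_congr rfl fun C _ => he C]
    exact h1 v
  · have key : ∑ C : Finset V, y C * ((C.card : ℝ) - 1)
        ≤ ∑ C : Finset V, (if C = ∅ then 0 else y C) * ((C.card : ℝ) - 1) := by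
      apply Finset.sum_le_sum
      intro C _
      split_ifs with h
      · subst h; simp; nlinarith [h0 (∅ : Finset V)]
      · exact le_refl _
    have e1 : ∑ C : Finset V, y C * ((C.card : ℝ) - 1)
        = (∑ v, Tf y v) - ∑ C : Finset V, y C := by
      rw [← sum_mul_card]
      rw [← Finset.sum_sub_distrib]
      apply Finset.sum_congr rfl; intro C _; ring
    have e2 : (Fintype.card V : ℝ) ≤ ∑ v, Tf y v := by
      calc (Fintype.card V : ℝ) = ∑ _v : V, (1:ℝ) := by simp
      _ ≤ ∑ v, Tf y v := Finset.sum_le_sum fun v _ => hcov v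
    dsimp only
    linarith

open scoped Classical in
noncomputable def supB (V : Type) [Fintype V] [DecidableEq V] : ℕ :=
  ∑ C : Finset V, 2 ^ C.card

open scoped Classical in
noncomputable def meas (y : Finset V → ℝ) : ℕ :=
  (univ.filter fun v : V => 1 < Tf y v).card * (supB V + 1)
    + ∑ C ∈ univ.filter (fun C : Finset V => y C ≠ 0), 2 ^ C.card

open scoped Classical in
lemma nu_le (y : Finset V → ℝ) :
    ∑ C ∈ univ.filter (fun C : Finset V => y C ≠ 0), 2 ^ C.card ≤ supB V :=
  Finset.sum_le_sum_of_subset (Finset.filter_subset _ _)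

open scoped Classical in
lemma keyStep (G : SimpleGraph V) (y : Finset V → ℝ) (h0 : ∀ C, 0 ≤ y C)
    (hcl : ∀ C : Finset V, ¬ G.IsClique (C : Set V) → y C = 0)
    (hcov : ∀ v, 1 ≤ Tf y v) {v : V} (hv : 1 < Tf y v) :
    ∃ y' : Finset V → ℝ, (∀ C, 0 ≤ y' C) ∧
      (∀ C : Finset V, ¬ G.IsClique (C : Set V) → y' C = 0) ∧
      (∀ w, 1 ≤ Tf y' w) ∧ (∑ C : Finset V, y' C = ∑ C : Finset V, y C) ∧
      meas y' < meas y := by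
  -- find a clique containing v with positive weight
  have hex : ∃ C : Finset V, v ∈ C ∧ 0 < y C := by
    by_contra h
    push_neg at h
    have : Tf y v ≤ 0 := by
      apply Finset.sum_nonpos
      intro C _
      split_ifs with hC
      · linarith [h C hC, h0 C]
      · exact le_refl 0
    linarith
  obtain ⟨C, hvC, hyC⟩ := hex
  have hCcl : G.IsClique (C : Set V) := by
    by_contra h
    exact absurd (hcl C h) (by linarith)
  set ε := min (y C) (Tf y v - 1) with hεdef
  have hε0 : 0 ≤ ε := le_min hyC.le (by linarith)
  have hεy : ε ≤ y C := min_le_left _ _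
  have hεT : ε ≤ Tf y v - 1 := min_le_right _ _
  have hCne : C.erase v ≠ C := fun h => (Finset.erase_eq_self.mp h) hvC
  set y' := fun D : Finset V =>
    y D + (if D = C.erase v then ε else 0) - (if D = C then ε else 0) with hy'
  have hT : ∀ w, Tf y' w
      = Tf y w + (if w ∈ C.erase v then ε else 0) - (if w ∈ C then ε else 0) := by
    intro w
    unfold Tf
    have h1 : ∀ D : Finset V, (if w ∈ D then y' D else 0)
        = (if w ∈ D then y D else 0)
          + (if D = C.erase v then (if w ∈ C.erase v then ε else 0) else 0)
          - (if D = C then (if w ∈ C then ε else 0) else 0) := by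
      intro D
      have e1 : (if D = C.erase v then (if w ∈ C.erase v then ε else 0) else 0)
          = (if w ∈ D then (if D = C.erase v then ε else 0) else 0) := by
        rcases eq_or_ne D (C.erase v) with rfl | h
        · simp
        · simp [h]
      have e2 : (if D = C then (if w ∈ C then ε else 0) else 0)
          = (if w ∈ D then (if D = C then ε else 0) else 0) := by
        rcases eq_or_ne D C with rfl | h
        · simp
        · simp [h]
      rw [e1, e2]
      simp only [hy']
      by_cases hw : w ∈ D <;> simp [hw]
    rw [Finset.sum_congr rfl fun D _ => h1 D, Finset.sum_sub_distrib,
      Finset.sum_add_distrib]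
    simp [Finset.sum_ite_eq]
  have h0' : ∀ D, 0 ≤ y' D := by
    intro D
    simp only [hy']
    rcases eq_or_ne D C with rfl | hDC
    · rw [if_neg hCne.symm, if_pos rfl]
      linarith
    · rw [if_neg hDC]
      split_ifs <;> linarith [h0 D]
  have hcl' : ∀ D : Finset V, ¬ G.IsClique (D : Set V) → y' D = 0 := by
    intro D hD
    have hDC : D ≠ C := fun h => hD (h ▸ hCcl)
    have hDe : D ≠ C.erase v := by
      intro h
      apply hD
      rw [h]
      exact hCcl.subset (Finset.coe_subset.mpr (Finset.erase_subset _ _))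
    simp only [hy', if_neg hDC, if_neg hDe, hcl D hD]
    ring
  have hcov' : ∀ w, 1 ≤ Tf y' w := by
    intro w
    rw [hT w]
    rcases eq_or_ne w v with rfl | hw
    · rw [if_neg (Finset.notMem_erase _ _), if_pos hvC]
      linarith
    · by_cases hwC : w ∈ C
      · rw [if_pos (Finset.mem_erase.mpr ⟨hw, hwC⟩), if_pos hwC]
        linarith [hcov w]
      · rw [if_neg (fun h => hwC (Finset.mem_of_mem_erase h)), if_neg hwC]
        linarith [hcov w]
  have hsum : ∑ D : Finset V, y' D = ∑ D : Finset V, y D := by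
    simp only [hy']
    rw [Finset.sum_sub_distrib, Finset.sum_add_distrib]
    simp [Finset.sum_ite_eq]
  refine ⟨y', h0', hcl', hcov', hsum, ?_⟩
  -- measure decrease
  have hTw : ∀ w, w ≠ v → Tf y' w = Tf y w := by
    intro w hw
    rw [hT w]
    by_cases hwC : w ∈ C
    · rw [if_pos (Finset.mem_erase.mpr ⟨hw, hwC⟩), if_pos hwC]; ring
    · rw [if_neg (fun h => hwC (Finset.mem_of_mem_erase h)), if_neg hwC]; ring
  have hTv : Tf y' v = Tf y v - ε := by
    rw [hT v, if_neg (Finset.notMem_erase _ _), if_pos hvC]; ring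
  by_cases hcase : Tf y v - 1 ≤ y C
  · -- ε = Tf y v - 1 ; excess at v disappears
    have hεA : ε = Tf y v - 1 := min_eq_right hcase
    have hTv1 : Tf y' v = 1 := by rw [hTv, hεA]; ring
    have hsub : (univ.filter fun w : V => 1 < Tf y' w)
        ⊆ (univ.filter fun w : V => 1 < Tf y w).erase v := by
      intro w hw
      rw [Finset.mem_filter] at hw
      have hwv : w ≠ v := by
        intro h; rw [h, hTv1] at hw; exact lt_irrefl 1 hw.2
      exact Finset.mem_erase.mpr ⟨hwv, Finset.mem_filter.mpr
        ⟨Finset.mem_univ w, by rw [← hTw w hwv]; exact hw.2⟩⟩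
    have hvS : v ∈ (univ.filter fun w : V => 1 < Tf y w) :=
      Finset.mem_filter.mpr ⟨Finset.mem_univ v, hv⟩
    obtain ⟨a, ha⟩ : ∃ a, (univ.filter fun w : V => 1 < Tf y w).card = a + 1 :=
      ⟨_, (Nat.succ_pred_eq_of_pos (Finset.card_pos.mpr ⟨v, hvS⟩)).symm⟩
    have hc1 : (univ.filter fun w : V => 1 < Tf y' w).card ≤ a := by
      have := Finset.card_le_card hsub
      rw [Finset.card_erase_of_mem hvS, ha] at this
      simpa using this
    have hstep : meas y' ≤ a * (supB V + 1) + supB V :=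
      Nat.add_le_add (Nat.mul_le_mul_right _ hc1) (nu_le y')
    have : a * (supB V + 1) + supB V < (a + 1) * (supB V + 1) := by
      rw [add_mul, one_mul]
      omega
    calc meas y' ≤ a * (supB V + 1) + supB V := hstep
      _ < (a + 1) * (supB V + 1) := this
      _ ≤ meas y := by rw [meas, ha]; omega
  · -- ε = y C ; clique C leaves the support
    push_neg at hcase
    have hεB : ε = y C := min_eq_left (by linarith)
    have hfeq : (univ.filter fun w : V => 1 < Tf y' w)
        = (univ.filter fun w : V => 1 < Tf y w) := by
      apply Finset.filter_congr
      intro w _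
      rcases eq_or_ne w v with rfl | hw
      · simp only [hTv, hεB]
        constructor <;> intro <;> linarith
      · rw [hTw w hw]
    have hCsupp : C ∈ univ.filter (fun D : Finset V => y D ≠ 0) :=
      Finset.mem_filter.mpr ⟨Finset.mem_univ C, hyC.ne'⟩
    have hssub : univ.filter (fun D : Finset V => y' D ≠ 0)
        ⊆ insert (C.erase v) ((univ.filter (fun D : Finset V => y D ≠ 0)).erase C) := by
      intro D hD
      rw [Finset.mem_filter] at hD
      rcases eq_or_ne D (C.erase v) with rfl | hDe
      · exact Finset.mem_insert_self _ _
      · have hDC : D ≠ C := by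
          intro h
          apply hD.2
          rw [h]
          simp only [hy', if_neg hCne.symm, hεB]
          simp
        apply Finset.mem_insert_of_mem
        refine Finset.mem_erase.mpr ⟨hDC, Finset.mem_filter.mpr ⟨Finset.mem_univ D, ?_⟩⟩
        intro h
        apply hD.2
        simp only [hy', if_neg hDe, if_neg hDC, h]
        ring
    have hν : ∑ D ∈ univ.filter (fun D : Finset V => y' D ≠ 0), 2 ^ D.card
        < ∑ D ∈ univ.filter (fun D : Finset V => y D ≠ 0), 2 ^ D.card := by
      have h1 : ∑ D ∈ univ.filter (fun D : Finset V => y' D ≠ 0), 2 ^ D.card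
          ≤ ∑ D ∈ insert (C.erase v) ((univ.filter (fun D : Finset V => y D ≠ 0)).erase C),
              2 ^ D.card :=
        Finset.sum_le_sum_of_subset hssub
      have h2 : ∑ D ∈ insert (C.erase v) ((univ.filter (fun D : Finset V => y D ≠ 0)).erase C),
            2 ^ D.card
          ≤ 2 ^ (C.erase v).card
            + ∑ D ∈ (univ.filter (fun D : Finset V => y D ≠ 0)).erase C, 2 ^ D.card := by
        by_cases hmem : C.erase v ∈ (univ.filter (fun D : Finset V => y D ≠ 0)).erase C
        · rw [Finset.insert_eq_self.mpr hmem]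
          exact Nat.le_add_left _ _
        · rw [Finset.sum_insert hmem]
      have h3 : 2 ^ (C.card) + ∑ D ∈ (univ.filter (fun D : Finset V => y D ≠ 0)).erase C,
            2 ^ D.card
          = ∑ D ∈ univ.filter (fun D : Finset V => y D ≠ 0), 2 ^ D.card :=
        Finset.add_sum_erase _ (fun D : Finset V => 2 ^ D.card) hCsupp
      have h4 : 2 ^ (C.erase v).card < 2 ^ C.card := by
        rw [Finset.card_erase_of_mem hvC]
        exact Nat.pow_lt_pow_right one_lt_two
          (Nat.sub_lt (Finset.card_pos.mpr ⟨v, hvC⟩) one_pos)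
      omega
    rw [meas, meas, hfeq]
    omega

open scoped Classical in
lemma keyMain (G : SimpleGraph V) (N : ℕ) : ∀ y : Finset V → ℝ, meas y ≤ N →
    (∀ C, 0 ≤ y C) → (∀ C : Finset V, ¬ G.IsClique (C : Set V) → y C = 0) →
    (∀ v, 1 ≤ Tf y v) →
    ∃ x : Finset V → ℝ, (∀ C, 0 ≤ x C ∧ x C ≤ 1) ∧
      (∀ C : Finset V, ¬ G.IsClique (C : Set V) → x C = 0) ∧
      (∀ v : V, ∑ C : Finset V, (if v ∈ C then x C else 0) ≤ 1) ∧
      (Fintype.card V : ℝ) - ∑ C : Finset V, y C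
        ≤ ∑ C : Finset V, x C * ((C.card : ℝ) - 1) := by
  induction N with
  | zero =>
    intro y hm h0 hcl hcov
    apply keyBase G y h0 hcl hcov
    intro v
    by_contra h
    push_neg at h
    have hvS : v ∈ (univ.filter fun w : V => 1 < Tf y w) :=
      Finset.mem_filter.mpr ⟨Finset.mem_univ v, h⟩
    have h1 : 1 ≤ (univ.filter fun w : V => 1 < Tf y w).card :=
      Finset.card_pos.mpr ⟨v, hvS⟩
    have h2 : 1 * (supB V + 1) ≤ (univ.filter fun w : V => 1 < Tf y w).card * (supB V + 1) :=
      Nat.mul_le_mul_right _ h1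
    rw [meas] at hm
    omega
  | succ N IH =>
    intro y hm h0 hcl hcov
    by_cases hE : ∀ v, Tf y v ≤ 1
    · exact keyBase G y h0 hcl hcov hE
    · push_neg at hE
      obtain ⟨v, hv⟩ := hE
      obtain ⟨y', h0', hcl', hcov', hsum, hlt⟩ := keyStep G y h0 hcl hcov hv
      obtain ⟨x, hx1, hx2, hx3, hx4⟩ := IH y' (by omega) h0' hcl' hcov'
      exact ⟨x, hx1, hx2, hx3, by rwa [hsum] at hx4⟩


lemma singleton_isClique (G : SimpleGraph V) (u : V) :
    G.IsClique (({u} : Finset V) : Set V) := by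
  rw [Finset.coe_singleton, SimpleGraph.isClique_iff]
  exact Set.pairwise_singleton _ _

/-- `FCC(G) = n - FCP(G)`. -/
theorem stmt1 (G : SimpleGraph V) : FCC G = (Fintype.card V : ℝ) - FCP G := by
  classical
  set n : ℝ := (Fintype.card V : ℝ) with hn
  set Pset := {s : ℝ | ∃ x : Finset V → ℝ, (∀ C, 0 ≤ x C ∧ x C ≤ 1) ∧
    (∀ C : Finset V, ¬ G.IsClique (C : Set V) → x C = 0) ∧
    (∀ v : V, ∑ C : Finset V, (if v ∈ C then x C else 0) ≤ 1) ∧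
    s = ∑ C : Finset V, x C * ((C.card : ℝ) - 1)} with hPset
  set Aset := {s : ℝ | ∃ y : Finset V → ℝ, (∀ C, 0 ≤ y C ∧ y C ≤ 1) ∧
    (∀ C : Finset V, ¬ G.IsClique (C : Set V) → y C = 0) ∧
    (∀ v : V, 1 ≤ ∑ C : Finset V, (if v ∈ C then y C else 0)) ∧
    s = ∑ C : Finset V, y C} with hAset
  have hP0 : (0:ℝ) ∈ Pset := by
    refine ⟨fun _ => 0, fun C => ⟨le_rfl, zero_le_one⟩, fun C _ => rfl, fun v => by simp,
      by simp⟩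
  have hPbdd : BddAbove Pset := by
    refine ⟨n, fun s hs => ?_⟩
    obtain ⟨x, hx01, hxcl, hxpack, rfl⟩ := hs
    have h1 : ∑ C : Finset V, x C * ((C.card : ℝ) - 1)
        ≤ ∑ C : Finset V, x C * (C.card : ℝ) := by
      apply Finset.sum_le_sum
      intro C _
      nlinarith [(hx01 C).1]
    have h2 : ∑ C : Finset V, x C * (C.card : ℝ) = ∑ v, Tf x v := sum_mul_card x
    have h3 : ∑ v, Tf x v ≤ n := by
      rw [hn]
      calc ∑ v, Tf x v ≤ ∑ _v : V, (1:ℝ) := Finset.sum_le_sum fun v _ => hxpack v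
        _ = (Fintype.card V : ℝ) := by simp
    linarith
  -- direction A : from a packing construct a cover of value n - s
  have memA : ∀ s ∈ Pset, (n - s) ∈ Aset := by
    intro s hs
    obtain ⟨x, hx01, hxcl, hxpack, rfl⟩ := hs
    have hx0 : ∀ C, 0 ≤ x C := fun C => (hx01 C).1
    have hTle : ∀ u, Tf x u ≤ 1 := hxpack
    set a : V → ℝ := fun u => 1 - Tf x u with ha
    have ha0 : ∀ u, 0 ≤ a u := fun u => by simp [ha]; linarith [hTle u]
    set y : Finset V → ℝ := fun C => x C + ∑ u : V, (if C = {u} then a u else 0) with hy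
    have hsing : ∀ u : V, (∑ u' : V, (if ({u} : Finset V) = {u'} then a u' else 0)) = a u := by
      intro u
      have : ∀ u' : V, (if ({u} : Finset V) = {u'} then a u' else 0)
          = (if u' = u then a u' else 0) := by
        intro u'
        congr 1
        simp [Finset.singleton_inj, eq_comm]
      rw [Finset.sum_congr rfl fun u' _ => this u']
      simp
    refine ⟨y, ?_, ?_, ?_, ?_⟩
    · intro C
      constructor
      · apply add_nonneg (hx0 C)
        apply Finset.sum_nonneg
        intro u _
        split_ifs
        exacts [ha0 u, le_rfl]
      · by_cases hC : ∃ u : V, C = {u}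
        · obtain ⟨u, rfl⟩ := hC
          rw [hy]
          simp only []
          rw [hsing u]
          have := le_Tf x hx0 (Finset.mem_singleton_self u)
          simp [ha]
          linarith
        · have hz : (∑ u : V, (if C = {u} then a u else 0)) = 0 := by
            apply Finset.sum_eq_zero
            intro u _
            exact if_neg (fun h => hC ⟨u, h⟩)
          rw [hy]
          simp only []
          rw [hz]
          simpa using (hx01 C).2
    · intro C hC
      have h1 : x C = 0 := hxcl C hC
      have h2 : (∑ u : V, (if C = {u} then a u else 0)) = 0 := by
        apply Finset.sum_eq_zero
        intro u _
        apply if_neg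
        intro h
        exact hC (h ▸ singleton_isClique G u)
      rw [hy]
      simp only []
      rw [h1, h2, add_zero]
    · intro v
      have hsplit : ∀ C : Finset V, (if v ∈ C then y C else 0)
          = (if v ∈ C then x C else 0)
            + (if v ∈ C then (∑ u : V, (if C = {u} then a u else 0)) else 0) := by
        intro C
        rw [hy]
        by_cases h : v ∈ C <;> simp [h]
      rw [Finset.sum_congr rfl fun C _ => hsplit C, Finset.sum_add_distrib]
      rw [sum_ite_singleton a v]
      have : (∑ C : Finset V, if v ∈ C then x C else 0) = Tf x v := rfl
      rw [this]
      simp [ha]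
    · have h1 : ∑ C : Finset V, y C
          = ∑ C : Finset V, x C + ∑ u : V, a u := by
        rw [hy]
        simp only []
        rw [Finset.sum_add_distrib]
        congr 1
        rw [Finset.sum_comm]
        apply Finset.sum_congr rfl
        intro u _
        simp [Finset.sum_ite_eq']
      have h2 : ∑ C : Finset V, x C * ((C.card : ℝ) - 1)
          = ∑ v, Tf x v - ∑ C : Finset V, x C := by
        rw [← sum_mul_card x, ← Finset.sum_sub_distrib]
        apply Finset.sum_congr rfl
        intro C _
        ring
      have h3 : ∑ u : V, a u = n - ∑ v, Tf x v := by
        rw [ha, hn]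
        rw [Finset.sum_sub_distrib]
        simp
      rw [h1, h2, h3]
      ring
  have hAne : Aset.Nonempty := ⟨n - 0, memA 0 hP0⟩
  have hAbdd : BddBelow Aset := by
    refine ⟨0, fun t ht => ?_⟩
    obtain ⟨y, hy01, _, _, rfl⟩ := ht
    exact Finset.sum_nonneg fun C _ => (hy01 C).1
  -- direction A conclusion
  have hd1 : FCP G ≤ n - FCC G := by
    apply csSup_le ⟨0, hP0⟩
    intro s hs
    have : FCC G ≤ n - s := csInf_le hAbdd (memA s hs)
    linarith
  -- direction B
  have hd2 : ∀ t ∈ Aset, n - FCP G ≤ t := by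
    intro t ht
    obtain ⟨y, hy01, hycl, hycov, rfl⟩ := ht
    have hycov' : ∀ v, 1 ≤ Tf y v := hycov
    obtain ⟨x, hx1, hx2, hx3, hx4⟩ :=
      keyMain G (meas y) y le_rfl (fun C => (hy01 C).1) hycl hycov'
    have hmem : (∑ C : Finset V, x C * ((C.card : ℝ) - 1)) ∈ Pset :=
      ⟨x, hx1, hx2, hx3, rfl⟩
    have hle : (∑ C : Finset V, x C * ((C.card : ℝ) - 1)) ≤ FCP G :=
      le_csSup hPbdd hmem
    linarith [hle, hx4, hn.le, hn.ge]
  have hd2' : n - FCP G ≤ FCC G := le_csInf hAne hd2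
  have : FCC G ≤ n - FCP G := by linarith
  linarith
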